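/- arXiv:2002.10870 — 3 statements merged into one kernel-verified Lean document; each statement's English description precedes it below -/
import Mathlib

section
/- Let G = (V, E) be an AMP chain graph and let X, Y, Z be three pairwise disjoint subsets of V with Z ⊆ ant(X ∪ Y). Let H = G_{ant(X∪Y)} be the induced subgraph of G on ant(X ∪ Y). Then Z separates X from Y in G (i.e., ⟨X, Y | Z⟩_G holds) if and only if Z separates X from Y in H (i.e., ⟨X, Y | Z⟩_H holds). -/
/-! # AMP chain graphs: basic definitions -/

/-- A mixed graph on vertex set `V`: directed edges `dir a b` (meaning `a → b`) and
undirected edges `undir a b` (meaning `a – b`, a symmetric relation). -/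
structure MixedGraph (V : Type*) where
  dir : V → V → Prop
  undir : V → V → Prop
  undir_symm : ∀ a b, undir a b → undir b a

namespace MixedGraph

variable {V : Type*} (G : MixedGraph V)

/-- A semi-directed step from `a` to `b`: either `a – b` or `a → b`. -/
def SemiStep (a b : V) : Prop := G.undir a b ∨ G.dir a b

/-- `a` and `b` are joined by an edge of either type, in either orientation. -/
def Link (a b : V) : Prop := G.dir a b ∨ G.dir b a ∨ G.undir a b

/-- `G` contains a partially directed (semi-directed) cycle: a sequence of `n ≥ 3`
distinct vertices `v₁, …, vₙ` (with `v_{n+1} = v₁`) such that every consecutive pair is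
joined by `vᵢ – v_{i+1}` or `vᵢ → v_{i+1}`, and at least one consecutive pair satisfies
`vⱼ → v_{j+1}`. -/
def HasPDCycle : Prop :=
  ∃ (v : V) (l : List V), 2 ≤ l.length ∧ (v :: l).Nodup ∧
    List.Chain G.SemiStep v (l ++ [v]) ∧
    ∃ p ∈ (v :: (l ++ [v])).zip (l ++ [v]), G.dir p.1 p.2

/-- An AMP chain graph is a mixed graph with no partially directed cycle. -/
def IsAMPCG : Prop := ¬ G.HasPDCycle

/-- `a` is anterior to `b`: `a = b` or there is a chain from `a` to `b` on which every
directed edge points toward `b` (reachability by semi-directed steps). -/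
def AnteriorTo (a b : V) : Prop := Relation.ReflTransGen G.SemiStep a b

/-- The set of anteriors of a set `A`. -/
def ant (A : Set V) : Set V := {a | ∃ b ∈ A, G.AnteriorTo a b}

/-- `a` is an ancestor of `b`: there is a directed path `a → ⋯ → b`. -/
def AncestorOf (a b : V) : Prop := Relation.TransGen G.dir a b

/-- `An A = A ∪ {ancestors of vertices of A}`. -/
def An (A : Set V) : Set V := A ∪ {a | ∃ b ∈ A, G.AncestorOf a b}

/-- `a` and `b` lie in the same chain component (connected component of the graph of
undirected edges). -/
def SameComponent (a b : V) : Prop := Relation.ReflTransGen G.undir a b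

/-- `Co A`: the union of the chain components that intersect `A`. -/
def Co (A : Set V) : Set V := {v | ∃ a ∈ A, G.SameComponent v a}

/-- The induced subgraph `G_A`: keep exactly the edges with both endpoints in `A`. -/
def induce (A : Set V) : MixedGraph V where
  dir a b := G.dir a b ∧ a ∈ A ∧ b ∈ A
  undir a b := G.undir a b ∧ a ∈ A ∧ b ∈ A
  undir_symm a b h := ⟨G.undir_symm a b h.1, h.2.2, h.2.1⟩

/-- `Ḡ`: the graph obtained from `G` by deleting all directed edges. -/
def undirPart : MixedGraph V where
  dir _ _ := False
  undir := G.undir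
  undir_symm := G.undir_symm

/-- Edge-wise union of two mixed graphs. -/
def union (G₁ G₂ : MixedGraph V) : MixedGraph V where
  dir a b := G₁.dir a b ∨ G₂.dir a b
  undir a b := G₁.undir a b ∨ G₂.undir a b
  undir_symm a b h := h.imp (G₁.undir_symm a b) (G₂.undir_symm a b)

/-- The extended subgraph `G[A] = G_{An(A)} ∪ Ḡ_{Co(An(A))}`. -/
def extendedSub (A : Set V) : MixedGraph V :=
  union (G.induce (G.An A)) (G.undirPart.induce (G.Co (G.An A)))

/-- The only edge between `a` and `b` is `a → b`. -/
def onlyDir (a b : V) : Prop := G.dir a b ∧ ¬ G.dir b a ∧ ¬ G.undir a b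

/-- The only edge between `a` and `b` is `a – b`. -/
def onlyUndir (a b : V) : Prop := G.undir a b ∧ ¬ G.dir a b ∧ ¬ G.dir b a

/-- There is no edge between `a` and `b`. -/
def noEdge (a b : V) : Prop := ¬ G.dir a b ∧ ¬ G.dir b a ∧ ¬ G.undir a b

/-- `(x, y, z)` forms a triplex: the induced subgraph on `{x, y, z}` is
`x → y – z`, `x → y ← z`, or `x – y ← z`. -/
def Triplex (x y z : V) : Prop :=
  x ≠ y ∧ y ≠ z ∧ x ≠ z ∧ G.noEdge x z ∧
    ((G.onlyDir x y ∧ G.onlyUndir y z) ∨ (G.onlyDir x y ∧ G.onlyDir z y) ∨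
      (G.onlyUndir x y ∧ G.onlyDir z y))

/-- `(x, a, b, y)` forms a bi-flag: four distinct vertices with the edges
`x → a`, `y → b`, and `a – b` present. -/
def BiFlag (x a b y : V) : Prop :=
  x ≠ a ∧ x ≠ b ∧ x ≠ y ∧ a ≠ b ∧ a ≠ y ∧ b ≠ y ∧
    G.dir x a ∧ G.dir y b ∧ G.undir a b

/-- Adjacency in the augmented graph `G^a`: every edge of `G` made undirected, plus an
edge `x – z` for every triplex `{x, y, z}` and an edge `x – y` for every bi-flag
`{x, a, b, y}`. -/
def AugAdj (a b : V) : Prop :=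
  a ≠ b ∧
    (G.Link a b ∨ (∃ y, G.Triplex a y b ∨ G.Triplex b y a) ∨
      (∃ p q, G.BiFlag a p q b ∨ G.BiFlag b p q a))

/-- The set of parents of `b`. -/
def pa (b : V) : Set V := {a | G.dir a b}

end MixedGraph

/-- In an undirected graph given by the adjacency relation `adj`, the set `Z` separates
`X` from `Y`: every path from a vertex of `X` to a vertex of `Y` intersects `Z`. -/
def Separates {V : Type*} (adj : V → V → Prop) (X Y Z : Set V) : Prop :=
  ∀ x ∈ X, ∀ y ∈ Y, ∀ l : List V,
    List.Chain adj x l → (x :: l).getLast? = some y → (x :: l).Nodup →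
      ∃ w ∈ x :: l, w ∈ Z

namespace MixedGraph

variable {V : Type*} (G : MixedGraph V)

/-- `⟨X, Y | Z⟩_G`: `Z` separates `X` from `Y` in the undirected graph
`(G[X ∪ Y ∪ Z])^a`. -/
def PSep (X Y Z : Set V) : Prop :=
  Separates (G.extendedSub (X ∪ Y ∪ Z)).AugAdj X Y Z

/-- `l` is a chain from `u` to `v` in `G`: a list of distinct vertices starting at `u`,
ending at `v`, each consecutive pair joined by an edge of `G` (of either type, in
either orientation). -/
def IsChainBetween (u v : V) (l : List V) : Prop :=
  l.Nodup ∧ l.Chain' G.Link ∧ l.head? = some u ∧ l.getLast? = some v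

end MixedGraph

/-- The list of consecutive triples of a list. -/
def consecTriples {V : Type*} (l : List V) : List (V × V × V) :=
  l.zip (l.tail.zip l.tail.tail)

namespace MixedGraph

variable {V : Type*} (G : MixedGraph V)

/-- `b` is a triplex node in the chain `l`: `a → b ← c`, `a → b – c`, or `a – b ← c` is
a subchain of `l`. -/
def TriplexNodeIn (l : List V) (b : V) : Prop :=
  ∃ t ∈ consecTriples l, t.2.1 = b ∧
    ((G.dir t.1 b ∧ G.dir t.2.2 b) ∨ (G.dir t.1 b ∧ G.undir b t.2.2) ∨
      (G.undir t.1 b ∧ G.dir t.2.2 b))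

/-- The chain `l` is `Z`-open: every triplex node of `l` is in `An(Z)`, and every
non-triplex node `b` of `l` is outside `Z`, unless `a – b – c` is a subchain of `l` and
`pa(b) \ Z ≠ ∅`. -/
def ZOpen (Z : Set V) (l : List V) : Prop :=
  (∀ b, G.TriplexNodeIn l b → b ∈ G.An Z) ∧
  (∀ b ∈ l, ¬ G.TriplexNodeIn l b → b ∈ Z →
    (∃ t ∈ consecTriples l, t.2.1 = b ∧ G.undir t.1 b ∧ G.undir b t.2.2) ∧
      (G.pa b \ Z).Nonempty)

end MixedGraph

/-- The union of the node sets of the subtree of `T - e` containing `i`. -/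
def subtreeUnion {V ι : Type*} (T : SimpleGraph ι) (C : ι → Set V) (e : Sym2 ι)
    (i : ι) : Set V :=
  ⋃ k ∈ {k | (T.deleteEdges {e}).Reachable i k}, C k

/-- `T` (a tree on index type `ι` with node sets `C i ⊆ V` covering `V`) is a
p-separation tree for the mixed graph `G`: for every edge `{i, j}` of `T` with
separator `S = C i ∩ C j`, if `V₁` and `V₂` are the unions of the node sets of the two
subtrees obtained by removing that edge, then `⟨V₁ \ S, V₂ \ S | S⟩_G` holds. -/
def IsPSepTree {V ι : Type*} (G : MixedGraph V) (T : SimpleGraph ι) (C : ι → Set V) :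
    Prop :=
  T.IsTree ∧ (∀ v : V, ∃ i, v ∈ C i) ∧
    ∀ i j, T.Adj i j →
      G.PSep (subtreeUnion T C s(i, j) i \ (C i ∩ C j))
        (subtreeUnion T C s(i, j) j \ (C i ∩ C j))
        (C i ∩ C j)

/-- An undirected graph `U` is an undirected independence graph (UIG) for `G`:
whenever `Z` separates `X` from `Y` in `U` (for pairwise disjoint `X`, `Y`, `Z`),
`⟨X, Y | Z⟩_G` holds. -/
def IsUIG {V : Type*} (G : MixedGraph V) (U : SimpleGraph V) : Prop :=
  ∀ X Y Z : Set V, Disjoint X Y → Disjoint X Z → Disjoint Y Z →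
    Separates U.Adj X Y Z → G.PSep X Y Z

/-- `Z` is a minimal separator for `X` and `Y` in the mixed graph `G`:
`⟨X, Y | Z⟩_G` holds and `⟨X, Y | Z'⟩_G` fails for every proper subset `Z' ⊊ Z`. -/
def IsMinimalSeparator {V : Type*} (G : MixedGraph V) (X Y Z : Set V) : Prop :=
  G.PSep X Y Z ∧ ∀ Z' ⊂ Z, ¬ G.PSep X Y Z'

/-- The consecutive pairs of a list read cyclically. -/
def cyclicPairs {V : Type*} (l : List V) : List (V × V) :=
  (l ++ l.take 1).zip (l ++ l.take 1).tail

/-- An undirected graph is chordal (triangulated) if every cycle of four or more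
vertices has a chord: an edge joining two non-consecutive vertices of the cycle. -/
def IsChordal {V : Type*} (H : SimpleGraph V) : Prop :=
  ∀ l : List V, 4 ≤ l.length → l.Nodup →
    (∀ p ∈ cyclicPairs l, H.Adj p.1 p.2) →
    ∃ a ∈ l, ∃ b ∈ l, H.Adj a b ∧ (a, b) ∉ cyclicPairs l ∧ (b, a) ∉ cyclicPairs l

/-- `T` (with node sets `C`) is a junction tree of the cliques of the graph `H`:
its nodes are exactly the maximal cliques of `H` (each appearing once), and it has the
running intersection property: `C i ∩ C j` is contained in every node on the unique
path between `i` and `j` in `T`. -/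
def IsJunctionTree {V ι : Type*} (H : SimpleGraph V) (T : SimpleGraph ι)
    (C : ι → Set V) : Prop :=
  T.IsTree ∧ Function.Injective C ∧ (∀ i, Maximal H.IsClique (C i)) ∧
    (∀ s : Set V, Maximal H.IsClique s → ∃ i, C i = s) ∧
    ∀ (i j k : ι) (p : T.Walk i j), p.IsPath → k ∈ p.support → C i ∩ C j ⊆ C k


namespace MixedGraph

variable {V : Type*} (G : MixedGraph V)

lemma ext' {G₁ G₂ : MixedGraph V}
    (hd : G₁.dir = G₂.dir) (hu : G₁.undir = G₂.undir) : G₁ = G₂ := by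
  cases G₁; cases G₂; cases hd; cases hu; rfl

lemma anteriorTo_of_transGen_dir {a b : V} (h : Relation.TransGen G.dir a b) :
    G.AnteriorTo a b :=
  (Relation.TransGen.mono (fun _ _ h => Or.inr h) _ _ h).to_reflTransGen

lemma anteriorTo_of_sameComponent {a b : V} (h : G.SameComponent a b) :
    G.AnteriorTo a b :=
  Relation.ReflTransGen.mono (fun _ _ h => Or.inl h) _ _ h

lemma mem_ant_of_anteriorTo {W : Set V} {a b : V} (h : G.AnteriorTo a b)
    (hb : b ∈ G.ant W) : a ∈ G.ant W := by
  obtain ⟨c, hc, h2⟩ := hb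
  exact ⟨c, hc, h.trans h2⟩

lemma an_subset_ant {W A : Set V} (hA : A ⊆ G.ant W) : G.An A ⊆ G.ant W := by
  rintro a (ha | ⟨b, hb, h⟩)
  · exact hA ha
  · exact G.mem_ant_of_anteriorTo (G.anteriorTo_of_transGen_dir h) (hA hb)

lemma co_subset_ant {W B : Set V} (hB : B ⊆ G.ant W) : G.Co B ⊆ G.ant W := by
  rintro v ⟨a, ha, h⟩
  exact G.mem_ant_of_anteriorTo (G.anteriorTo_of_sameComponent h) (hB ha)

lemma an_induce_ant {W A : Set V} (hA : A ⊆ G.ant W) :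
    (G.induce (G.ant W)).An A = G.An A := by
  ext a
  constructor
  · rintro (ha | ⟨b, hb, h⟩)
    · exact Or.inl ha
    · exact Or.inr ⟨b, hb, Relation.TransGen.mono (fun _ _ hd => hd.1) _ _ h⟩
  · rintro (ha | ⟨b, hb, h⟩)
    · exact Or.inl ha
    · refine Or.inr ⟨b, hb, ?_⟩
      have hbS : b ∈ G.ant W := hA hb
      induction h using Relation.TransGen.head_induction_on with
      | single h' =>
          exact Relation.TransGen.single
            ⟨h', G.mem_ant_of_anteriorTo (Relation.ReflTransGen.single (Or.inr h')) hbS, hbS⟩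
      | head h' htg ihh =>
          rename_i a c
          have hcS : c ∈ G.ant W :=
            G.mem_ant_of_anteriorTo (G.anteriorTo_of_transGen_dir htg) hbS
          have haS : a ∈ G.ant W :=
            G.mem_ant_of_anteriorTo (Relation.ReflTransGen.single (Or.inr h')) hcS
          exact Relation.TransGen.head ⟨h', haS, hcS⟩ ihh

lemma co_induce_ant {W B : Set V} (hB : B ⊆ G.ant W) :
    (G.induce (G.ant W)).Co B = G.Co B := by
  ext v
  constructor
  · rintro ⟨a, ha, h⟩
    exact ⟨a, ha, Relation.ReflTransGen.mono (fun _ _ hu => hu.1) _ _ h⟩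
  · rintro ⟨a, ha, h⟩
    refine ⟨a, ha, ?_⟩
    have haS : a ∈ G.ant W := hB ha
    induction h using Relation.ReflTransGen.head_induction_on with
    | refl => exact Relation.ReflTransGen.refl
    | head h' hrt ihh =>
        rename_i v w
        have hwS : w ∈ G.ant W :=
          G.mem_ant_of_anteriorTo (G.anteriorTo_of_sameComponent hrt) haS
        have hvS : v ∈ G.ant W :=
          G.mem_ant_of_anteriorTo (Relation.ReflTransGen.single (Or.inl h')) hwS
        exact Relation.ReflTransGen.head ⟨h', hvS, hwS⟩ ihh

lemma extendedSub_induce_ant {W A : Set V} (hA : A ⊆ G.ant W) :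
    (G.induce (G.ant W)).extendedSub A = G.extendedSub A := by
  have hAn : (G.induce (G.ant W)).An A = G.An A := G.an_induce_ant hA
  have hAnS : G.An A ⊆ G.ant W := G.an_subset_ant hA
  have hCo : (G.induce (G.ant W)).Co (G.An A) = G.Co (G.An A) := by
    ext v
    constructor
    · rintro ⟨a, ha, h⟩
      exact ⟨a, ha, Relation.ReflTransGen.mono (fun _ _ hu => hu.1) _ _ h⟩
    · rintro ⟨a, ha, h⟩
      have := (Set.ext_iff.mp (G.co_induce_ant hAnS) v).mpr ⟨a, ha, h⟩
      exact this
  have hCoS : G.Co (G.An A) ⊆ G.ant W := G.co_subset_ant hAnS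
  apply ext'
  · funext a b
    apply propext
    simp only [extendedSub, union, hAn]
    simp only [induce, undirPart]
    constructor
    · rintro (⟨⟨hd, _, _⟩, ha, hb⟩ | ⟨hf, _⟩)
      · exact Or.inl ⟨hd, ha, hb⟩
      · exact absurd hf id
    · rintro (⟨hd, ha, hb⟩ | ⟨hf, _⟩)
      · exact Or.inl ⟨⟨hd, hAnS ha, hAnS hb⟩, ha, hb⟩
      · exact absurd hf id
  · funext a b
    apply propext
    simp only [extendedSub, union, hAn, hCo]
    simp only [induce, undirPart]
    constructor
    · rintro (⟨⟨hu, _, _⟩, ha, hb⟩ | ⟨⟨hu, _, _⟩, ha, hb⟩)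
      · exact Or.inl ⟨hu, ha, hb⟩
      · exact Or.inr ⟨hu, ha, hb⟩
    · rintro (⟨hu, ha, hb⟩ | ⟨hu, ha, hb⟩)
      · exact Or.inl ⟨⟨hu, hAnS ha, hAnS hb⟩, ha, hb⟩
      · exact Or.inr ⟨⟨hu, hCoS ha, hCoS hb⟩, ha, hb⟩

end MixedGraph

/-- **Proposition 1.** Let `G` be an AMP chain graph and let `X, Y, Z` be three
pairwise disjoint subsets of `V` with `Z ⊆ ant(X ∪ Y)`, and let
`H = G_{ant(X ∪ Y)}` be the induced subgraph of `G` on `ant(X ∪ Y)`.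
Then `⟨X, Y | Z⟩_G` holds if and only if `⟨X, Y | Z⟩_H` holds. -/
theorem amp_psep_iff_psep_induce_ant {V : Type*} (G : MixedGraph V) (hG : G.IsAMPCG)
    (X Y Z : Set V) (hXY : Disjoint X Y) (hXZ : Disjoint X Z) (hYZ : Disjoint Y Z)
    (hZant : Z ⊆ G.ant (X ∪ Y)) :
    G.PSep X Y Z ↔ (G.induce (G.ant (X ∪ Y))).PSep X Y Z := by
  have hA : X ∪ Y ∪ Z ⊆ G.ant (X ∪ Y) := by
    rintro v (hv | hv)
    · exact ⟨v, hv, Relation.ReflTransGen.refl⟩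
    · exact hZant hv
  unfold MixedGraph.PSep
  rw [G.extendedSub_induce_ant hA]
end

section
/- Let u and v be two non-adjacent vertices of an AMP chain graph G, and let ρ be a chain from u to v in G. If ρ is not contained in ant({u} ∪ {v}), then for every subset S of ant({u} ∪ {v}) \ {u, v}, the chain ρ is not S-open (i.e., ρ is blocked by S). -/
namespace AMPAux

open MixedGraph

variable {V : Type*} {G : MixedGraph V}

lemma An_subset_ant {S A : Set V} (hS : S ⊆ G.ant A) : G.An S ⊆ G.ant A := by
  rintro a (ha | ⟨b, hb, hab⟩)
  · exact hS ha
  · obtain ⟨c, hc, hbc⟩ := hS hb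
    exact ⟨c, hc, ((Relation.TransGen.mono (fun x y h => Or.inr h) _ _ hab).to_reflTransGen).trans hbc⟩

lemma consecTriples_cons3 (a b c : V) (r : List V) :
    consecTriples (a :: b :: c :: r) = (a, b, c) :: consecTriples (b :: c :: r) := rfl

lemma mem_consecTriples_cons {t : V × V × V} {l : List V} (a : V)
    (h : t ∈ consecTriples l) : t ∈ consecTriples (a :: l) := by
  match l with
  | [] => simp [consecTriples] at h
  | [x] => simp [consecTriples] at h
  | [x, y] => simp [consecTriples] at h
  | b :: c :: r =>
    rw [consecTriples_cons3]
    exact List.mem_cons_of_mem _ h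

/-- The triplex pattern we produce. -/
def TPat (G : MixedGraph V) (t : V × V × V) : Prop :=
  (G.dir t.1 t.2.1 ∧ G.dir t.2.2 t.2.1) ∨ (G.dir t.1 t.2.1 ∧ G.undir t.2.1 t.2.2) ∨
    (G.undir t.1 t.2.1 ∧ G.dir t.2.2 t.2.1)

lemma exists_triplex_aux {P : V → Prop}
    (hP : ∀ x y, G.SemiStep x y → P y → P x) :
    ∀ (r : List V) (a b : V), G.dir a b → ¬ P b →
      List.Chain G.Link b r → (∀ w, (b :: r).getLast? = some w → P w) →
      ∃ t ∈ consecTriples (a :: b :: r), ¬ P t.2.1 ∧ TPat G t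
  | [], a, b, hab, hb, _, hlast => absurd (hlast b rfl) hb
  | c :: r, a, b, hab, hb, hch, hlast => by
    obtain ⟨hbc, hch'⟩ := List.chain_cons.mp hch
    by_cases hdir : G.dir b c
    · have hc : ¬ P c := fun h => hb (hP _ _ (Or.inr hdir) h)
      obtain ⟨t, ht, h⟩ := exists_triplex_aux hP r b c hdir hc hch'
        (fun w hw => hlast w (by rwa [List.getLast?_cons_cons]))
      exact ⟨t, mem_consecTriples_cons a ht, h⟩
    · rcases hbc with h1 | h2 | h3
      · exact absurd h1 hdir
      · exact ⟨(a, b, c), by rw [consecTriples_cons3]; exact List.mem_cons_self,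
          hb, Or.inl ⟨hab, h2⟩⟩
      · exact ⟨(a, b, c), by rw [consecTriples_cons3]; exact List.mem_cons_self,
          hb, Or.inr (Or.inl ⟨hab, h3⟩)⟩

lemma exists_triplex_main {P : V → Prop}
    (hP : ∀ x y, G.SemiStep x y → P y → P x) :
    ∀ (r : List V) (a : V), P a → List.Chain G.Link a r →
      (∃ w ∈ a :: r, ¬ P w) → (∀ w, (a :: r).getLast? = some w → P w) →
      ∃ t ∈ consecTriples (a :: r), ¬ P t.2.1 ∧ TPat G t
  | [], a, ha, _, hw, _ => by
    obtain ⟨w, hwmem, hnw⟩ := hw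
    simp only [List.mem_singleton] at hwmem
    exact absurd (hwmem ▸ ha) hnw
  | b :: r, a, ha, hch, hw, hlast => by
    obtain ⟨hab, hch'⟩ := List.chain_cons.mp hch
    by_cases hb : P b
    · obtain ⟨w, hwmem, hnw⟩ := hw
      have hw' : w ∈ b :: r := by
        rcases List.mem_cons.mp hwmem with h | h
        · exact absurd (h ▸ ha) hnw
        · exact h
      obtain ⟨t, ht, h⟩ := exists_triplex_main hP r b hb hch' ⟨w, hw', hnw⟩
        (fun w hw => hlast w (by rwa [List.getLast?_cons_cons]))
      exact ⟨t, mem_consecTriples_cons a ht, h⟩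
    · have hdir : G.dir a b := by
        rcases hab with h | h | h
        · exact h
        · exact absurd (hP b a (Or.inr h) ha) hb
        · exact absurd (hP b a (Or.inl (G.undir_symm a b h)) ha) hb
      exact exists_triplex_aux hP r a b hdir hb hch'
        (fun w hw => hlast w (by rwa [List.getLast?_cons_cons]))

end AMPAux

/-- **Lemma 1.** Let `u` and `v` be two non-adjacent vertices of an AMP chain graph
`G`, and let `ρ` be a chain from `u` to `v` in `G`.  If `ρ` is not contained in
`ant({u} ∪ {v})`, then for every subset `S` of `ant({u} ∪ {v}) \ {u, v}` the chain `ρ`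
is not `S`-open (i.e. `ρ` is blocked by `S`). -/
theorem amp_chain_outside_ant_blocked {V : Type*} (G : MixedGraph V)
    (hG : G.IsAMPCG) (u v : V) (huv : u ≠ v) (hnadj : ¬ G.Link u v) (ρ : List V)
    (hρ : G.IsChainBetween u v ρ) (hout : ¬ ∀ w ∈ ρ, w ∈ G.ant ({u} ∪ {v}))
    (S : Set V) (hS : S ⊆ G.ant ({u} ∪ {v}) \ {u, v}) :
    ¬ G.ZOpen S ρ := by
  classical
  intro hopen
  obtain ⟨hnd, hch', hhead, hlast⟩ := hρ
  set P : V → Prop := fun w => w ∈ G.ant ({u} ∪ {v}) with hPdef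
  have hP : ∀ x y, G.SemiStep x y → P y → P x := by
    rintro x y hxy ⟨c, hc, hyc⟩
    exact ⟨c, hc, Relation.ReflTransGen.head hxy hyc⟩
  obtain ⟨r, rfl⟩ : ∃ r, ρ = u :: r := by
    cases ρ with
    | nil => simp at hhead
    | cons a r =>
      simp only [List.head?_cons, Option.some.injEq] at hhead
      exact ⟨r, by rw [hhead]⟩
  have hch : List.Chain G.Link u r := hch'
  have hu : P u := ⟨u, Or.inl rfl, Relation.ReflTransGen.refl⟩
  have hv : P v := ⟨v, Or.inr rfl, Relation.ReflTransGen.refl⟩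
  have hwit : ∃ w ∈ u :: r, ¬ P w := by
    by_contra h
    push_neg at h
    exact hout h
  have hlastP : ∀ w, (u :: r).getLast? = some w → P w := by
    intro w hw
    rw [hlast] at hw
    exact (Option.some.inj hw) ▸ hv
  obtain ⟨t, ht, hnt, hpat⟩ := AMPAux.exists_triplex_main hP r u hu hch hwit hlastP
  have htn : G.TriplexNodeIn (u :: r) t.2.1 := ⟨t, ht, rfl, hpat⟩
  exact hnt (AMPAux.An_subset_ant (fun s hs => (hS hs).1) (hopen.1 t.2.1 htn))
end

section
/- Let G be an AMP chain graph on vertex set V, let Ḡ_V be an undirected independence graph for G, let Ḡ_V^t be a triangulation of Ḡ_V (a chordal graph on V containing all edges of Ḡ_V), and let T be a junction tree of the cliques of Ḡ_V^t. Then T is a p-separation tree for G. -/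
section AuxLemmas

variable {V ι : Type*}

/-- Every node of the tree is, after deleting the edge `{i, j}`, still reachable from
`i` or from `j`. -/
lemma reach_side_aux (T : SimpleGraph ι) (i j : ι) :
    ∀ {x y : ι}, T.Walk x y →
      ((T.deleteEdges {s(i, j)}).Reachable i x ∨ (T.deleteEdges {s(i, j)}).Reachable j x) →
      ((T.deleteEdges {s(i, j)}).Reachable i y ∨ (T.deleteEdges {s(i, j)}).Reachable j y)
  | _, _, .nil, h => h
  | x, y, .cons (v := b) hadj p, hx => by
      refine reach_side_aux T i j p ?_
      by_cases he : s(x, b) = s(i, j)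
      · rw [Sym2.eq_iff] at he
        rcases he with ⟨rfl, rfl⟩ | ⟨rfl, rfl⟩
        · exact Or.inr (SimpleGraph.Reachable.refl _)
        · exact Or.inl (SimpleGraph.Reachable.refl _)
      · have hadj' : (T.deleteEdges {s(i, j)}).Adj x b := by
          simp only [SimpleGraph.deleteEdges_adj, Set.mem_singleton_iff]
          exact ⟨hadj, he⟩
        exact hx.imp (fun h => h.trans hadj'.reachable) (fun h => h.trans hadj'.reachable)

lemma reach_side (T : SimpleGraph ι) (hT : T.Connected) (i j k : ι) :
    (T.deleteEdges {s(i, j)}).Reachable i k ∨ (T.deleteEdges {s(i, j)}).Reachable j k := by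
  obtain ⟨w⟩ := hT i k
  exact reach_side_aux T i j w (Or.inl (SimpleGraph.Reachable.refl _))

/-- The key junction-tree intersection property: the vertex sets of the two subtrees
obtained by removing an edge intersect inside the edge's separator. -/
lemma subtreeUnion_inter (T : SimpleGraph ι) (hT : T.IsTree) (C : ι → Set V)
    (hRIP : ∀ (i j k : ι) (p : T.Walk i j), p.IsPath → k ∈ p.support → C i ∩ C j ⊆ C k)
    {i j : ι} (hij : T.Adj i j) :
    subtreeUnion T C s(i, j) i ∩ subtreeUnion T C s(i, j) j ⊆ C i ∩ C j := by
  classical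
  rintro v ⟨hv1, hv2⟩
  simp only [subtreeUnion, Set.mem_iUnion, Set.mem_setOf_eq, exists_prop] at hv1 hv2
  obtain ⟨k, hk, hvk⟩ := hv1
  obtain ⟨l, hl, hvl⟩ := hv2
  obtain ⟨w⟩ := hT.isConnected k l
  have hb : T.IsBridge s(i, j) :=
    SimpleGraph.isAcyclic_iff_forall_edge_isBridge.mp hT.IsAcyclic
      (T.mem_edgeSet.mpr hij)
  have hnr : ¬ (T.deleteEdges {s(i, j)}).Reachable i j := SimpleGraph.isBridge_iff.mp hb
  set p : T.Path k l := w.toPath with hp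
  have hsupp : ∀ m : ι, (m = i ∨ m = j) → m ∈ (p : T.Walk k l).support := by
    rintro m hm
    by_contra hns
    have hq : ∀ e ∈ (p : T.Walk k l).edges, e ∉ ({s(i, j)} : Set (Sym2 ι)) := by
      intro e he hmem'
      rw [Set.mem_singleton_iff] at hmem'
      subst hmem'
      rcases hm with rfl | rfl
      · exact hns ((p : T.Walk k l).fst_mem_support_of_mem_edges he)
      · exact hns ((p : T.Walk k l).snd_mem_support_of_mem_edges he)
    have hkl : (T.deleteEdges {s(i, j)}).Reachable k l :=
      ⟨(p : T.Walk k l).toDeleteEdges _ hq⟩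
    exact hnr (hk.trans (hkl.trans hl.symm))
  have hvi : v ∈ C i := hRIP k l i p.val p.2 (hsupp i (Or.inl rfl)) ⟨hvk, hvl⟩
  have hvj : v ∈ C j := hRIP k l j p.val p.2 (hsupp j (Or.inr rfl)) ⟨hvk, hvl⟩
  exact ⟨hvi, hvj⟩

/-- Propagating a predicate along a chain. -/
lemma chain_all {α : Type*} (adj : α → α → Prop) (P : α → Prop) :
    ∀ (x : α) (l : List α), List.Chain adj x l → P x →
      (∀ a b, P a → adj a b → b ∈ x :: l → P b) → ∀ w ∈ x :: l, P w := by
  intro x l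
  induction l generalizing x with
  | nil =>
    intro _ hx _ w hw
    rw [List.mem_singleton] at hw
    subst hw; exact hx
  | cons b l ih =>
    intro hc hx hstep w hw
    replace hc := List.chain_cons.mp hc
    have hb : P b := hstep x b hx hc.1 (by simp)
    rcases List.mem_cons.mp hw with rfl | hw'
    · exact hx
    · exact ih b hc.2 hb
        (fun a c ha hac hc' => hstep a c ha hac (List.mem_cons_of_mem _ hc')) w hw'

end AuxLemmas

/-- **Theorem 4.** Let `G` be an AMP chain graph on `V`, let `U` be an undirected
independence graph for `G`, let `Ht` be a triangulation of `U` (a chordal graph on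
`V` containing all edges of `U`), and let `T` be a junction tree of the cliques of
`Ht`.  Then `T` is a p-separation tree for `G`. -/
theorem junctionTree_isPSepTree {V ι : Type*} [Finite V] [Finite ι]
    (G : MixedGraph V) (hG : G.IsAMPCG) (U Ht : SimpleGraph V) (hUIG : IsUIG G U)
    (hsub : U ≤ Ht) (hchordal : IsChordal Ht) (T : SimpleGraph ι) (C : ι → Set V)
    (hJT : IsJunctionTree Ht T C) :
    IsPSepTree G T C := by
  obtain ⟨hTree, hinj, hmaxcl, hsurj, hRIP⟩ := hJT
  -- every edge of `Ht` lies in some clique of the junction tree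
  have hedge_clique : ∀ a b : V, Ht.Adj a b → ∃ k, a ∈ C k ∧ b ∈ C k := by
    intro a b hab
    have hcl : Ht.IsClique {a, b} := SimpleGraph.isClique_pair.mpr fun _ => hab
    obtain ⟨t, hst, hmax⟩ := Finite.exists_le_maximal hcl
    obtain ⟨k, hk⟩ := hsurj t hmax
    exact ⟨k, hk ▸ hst (by simp), hk ▸ hst (by simp)⟩
  refine ⟨hTree, ?_, ?_⟩
  · -- the clique sets cover `V`
    intro v
    obtain ⟨t, hst, hmax⟩ := Finite.exists_le_maximal (Ht.isClique_singleton v)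
    obtain ⟨k, hk⟩ := hsurj t hmax
    exact ⟨k, hk ▸ hst rfl⟩
  · intro i j hij
    have hinter : subtreeUnion T C s(i, j) i ∩ subtreeUnion T C s(i, j) j ⊆ C i ∩ C j :=
      subtreeUnion_inter T hTree C hRIP hij
    -- separation in the chordal graph `Ht`
    have hsepHt : Separates Ht.Adj (subtreeUnion T C s(i, j) i \ (C i ∩ C j))
        (subtreeUnion T C s(i, j) j \ (C i ∩ C j)) (C i ∩ C j) := by
      intro x hx y hy l hch hlast _
      by_contra hno
      push_neg at hno
      have hall : ∀ w ∈ x :: l,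
          w ∈ subtreeUnion T C s(i, j) i ∧ w ∉ C i ∩ C j := by
        refine chain_all Ht.Adj _ x l hch ⟨hx.1, hx.2⟩ ?_
        rintro a b ⟨haV1, haS⟩ hab hbmem
        refine ⟨?_, fun hbS => hno b hbmem hbS⟩
        obtain ⟨k, hak, hbk⟩ := hedge_clique a b hab
        rcases reach_side T hTree.isConnected i j k with hk | hk
        · exact Set.mem_biUnion hk hbk
        · exact absurd (hinter ⟨haV1, Set.mem_biUnion hk hak⟩) haS
      have hyl : y ∈ x :: l := by
        obtain ⟨h, hEq⟩ := List.mem_getLast?_eq_getLast (Option.mem_def.mpr hlast)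
        rw [hEq]
        exact List.getLast_mem h
      exact (hall y hyl).2 (hinter ⟨(hall y hyl).1, hy.1⟩)
    -- transfer the separation to the subgraph `U`
    have hsepU : Separates U.Adj (subtreeUnion T C s(i, j) i \ (C i ∩ C j))
        (subtreeUnion T C s(i, j) j \ (C i ∩ C j)) (C i ∩ C j) := by
      intro x hx y hy l hch hlast hnd
      exact hsepHt x hx y hy l (List.IsChain.imp (fun a b h => hsub h) hch) hlast hnd
    refine hUIG _ _ _ ?_ Set.disjoint_sdiff_left Set.disjoint_sdiff_left hsepU
    exact Set.disjoint_left.mpr fun a ha hb => ha.2 (hinter ⟨ha.1, hb.1⟩)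
end
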